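/- arXiv:1403.0460 — 2 statements merged into one kernel-verified Lean document; each statement's English description precedes it below -/
import Mathlib

section
/- Fix integers n ≥ 1, c ≥ 1 and d ∈ ℤ, and let (b₁, b₂, e) ∈ T(c) be such that c_d·1 − s_d b₁ is invertible. Define b₁' = (c_d·1 − s_d b₁)^{-1}(s_d·1 + c_d b₁) and b₂' = (c_d·1 − s_d b₁)^n b₂. Then: (i) (b₁', b₂', e) ∈ T(c); (ii) c_{−d}·1 − s_{−d} b₁' is invertible and applying the same construction with parameter −d to (b₁', b₂', e) gives back (b₁, b₂, e); (iii) the construction is GL(c, ℂ)-equivariant, i.e. it commutes with the action φ : (b₁, b₂, e) ↦ (φb₁φ^{-1}, φb₂φ^{-1}, eφ^{-1}). -/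
open Matrix

abbrev Mat (c : ℕ) := Matrix (Fin c) (Fin c) ℂ

noncomputable def cS (c : ℕ) (m : ℤ) : ℂ :=
  ((Real.cos (Real.pi * (m : ℝ) / ((c : ℝ) + 1)) : ℝ) : ℂ)

noncomputable def sS (c : ℕ) (m : ℤ) : ℂ :=
  ((Real.sin (Real.pi * (m : ℝ) / ((c : ℝ) + 1)) : ℝ) : ℂ)

noncomputable def A1M (c : ℕ) (m : ℤ) (A1 A2 : Mat c) : Mat c :=
  cS c m • A1 - sS c m • A2

noncomputable def A2M (c : ℕ) (m : ℤ) (A1 A2 : Mat c) : Mat c :=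
  sS c m • A1 + cS c m • A2

noncomputable def BM (c : ℕ) (m : ℤ) (A1 A2 : Mat c) : Mat c :=
  (A2M c m A1 A2)⁻¹ * A1M c m A1 A2

noncomputable def DM (n c : ℕ) (m : ℤ) (C : Fin n → Mat c) : Mat c :=
  ∑ q : Fin n, (((n - 1).choose q.val : ℂ) * cS c m ^ (n - 1 - q.val) * sS c m ^ q.val) • C q

noncomputable def EM (n c : ℕ) (m : ℤ) (A1 A2 : Mat c) (C : Fin n → Mat c) : Mat c :=
  DM n c m C * A2M c m A1 A2

/-- Condition (P1). -/
def CondP1 (n c : ℕ) (A1 A2 : Mat c) (C : Fin n → Mat c) : Prop :=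
  (∀ h : n = 1, A1 * C ⟨0, by omega⟩ * A2 = A2 * C ⟨0, by omega⟩ * A1) ∧
  ∀ q : ℕ, ∀ hq : q + 1 < n,
    A1 * C ⟨q, by omega⟩ = A2 * C ⟨q + 1, hq⟩ ∧
    C ⟨q, by omega⟩ * A1 = C ⟨q + 1, hq⟩ * A2

/-- Condition (P2). -/
def CondP2 (c : ℕ) (A1 A2 : Mat c) : Prop :=
  ∃ ν : ℂ × ℂ, ν ≠ 0 ∧ (ν.1 • A1 + ν.2 • A2).det ≠ 0

/-- Condition (P3), with `C1`, `Cn` the first and last of the `C` matrices. -/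
def CondP3 (n c : ℕ) (A1 A2 C1 Cn : Mat c) (e : Fin c → ℂ) : Prop :=
  ∀ l1 l2 m1 m2 : ℂ, (l1, l2) ≠ 0 → l1 ^ n * m1 + l2 ^ n * m2 = 0 →
    ∀ v : Fin c → ℂ,
      (l2 • A1 + l1 • A2).mulVec v = 0 →
      (C1 * A2 + m1 • 1).mulVec v = 0 →
      (Cn * A1 + ((-1 : ℂ) ^ (n - 1) * m2) • 1).mulVec v = 0 →
      e ⬝ᵥ v = 0 → v = 0

/-- Membership in `P^n(c)`: conditions (P1), (P2), (P3). -/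
def CondP (n c : ℕ) (hn : 0 < n) (A1 A2 : Mat c) (C : Fin n → Mat c) (e : Fin c → ℂ) : Prop :=
  CondP1 n c A1 A2 C ∧ CondP2 c A1 A2 ∧
    CondP3 n c A1 A2 (C ⟨0, hn⟩) (C ⟨n - 1, by omega⟩) e

/-- Condition (T2). -/
def CondT2 (c : ℕ) (b1 b2 : Mat c) (e : Fin c → ℂ) : Prop :=
  ∀ z w : ℂ, ∀ v : Fin c → ℂ,
    (b1 + z • 1).mulVec v = 0 → (b2 + w • 1).mulVec v = 0 → e ⬝ᵥ v = 0 → v = 0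

/-- ADHM data: conditions (T1) and (T2). -/
def ADHM (c : ℕ) (b1 b2 : Mat c) (e : Fin c → ℂ) : Prop :=
  b1 * b2 = b2 * b1 ∧ CondT2 c b1 b2 e

lemma cS_neg (c : ℕ) (d : ℤ) : cS c (-d) = cS c d := by
  unfold cS
  push_cast
  rw [mul_neg, neg_div, Complex.cos_neg]

lemma sS_neg (c : ℕ) (d : ℤ) : sS c (-d) = - sS c d := by
  unfold sS
  push_cast
  rw [mul_neg, neg_div, Complex.sin_neg]

lemma cS_sq_add_sS_sq (c : ℕ) (d : ℤ) : cS c d ^ 2 + sS c d ^ 2 = 1 := by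
  unfold cS sS
  norm_cast
  exact Real.cos_sq_add_sin_sq _

lemma myConjPow {c : ℕ} (φ A ψ : Mat c) (h : ψ * φ = 1) (k : ℕ) :
    (φ * A * ψ) ^ k = φ * A ^ k * ψ := by
  induction k with
  | zero => simp [show φ * ψ = 1 from mul_eq_one_comm.mp h]
  | succ m ih =>
      rw [pow_succ, ih, pow_succ]
      calc φ * A ^ m * ψ * (φ * A * ψ) = φ * A ^ m * (ψ * φ) * A * ψ := by
            simp only [mul_assoc]
        _ = φ * (A ^ m * A) * ψ := by rw [h]; simp only [mul_one, mul_assoc]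

/-- the transition map (b₁, b₂, e) ↦ (b₁', b₂', e) with
b₁' = (c_d·1 − s_d b₁)⁻¹(s_d·1 + c_d b₁), b₂' = (c_d·1 − s_d b₁)^n b₂:
(i) preserves ADHM data; (ii) is inverted by the same construction with parameter −d;
(iii) is GL(c,ℂ)-equivariant. -/
theorem stmt12 (n c : ℕ) (hn : 0 < n) (hc : 0 < c) (d : ℤ)
    (b1 b2 : Mat c) (e : Fin c → ℂ) (hT : ADHM c b1 b2 e)
    (hinv : IsUnit (cS c d • (1 : Mat c) - sS c d • b1)) :
    -- (i)
    ADHM c ((cS c d • (1 : Mat c) - sS c d • b1)⁻¹ * (sS c d • (1 : Mat c) + cS c d • b1))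
      ((cS c d • (1 : Mat c) - sS c d • b1) ^ n * b2) e ∧
    -- (ii)
    (IsUnit (cS c (-d) • (1 : Mat c) -
        sS c (-d) • ((cS c d • (1 : Mat c) - sS c d • b1)⁻¹ *
          (sS c d • (1 : Mat c) + cS c d • b1))) ∧
      (cS c (-d) • (1 : Mat c) -
          sS c (-d) • ((cS c d • (1 : Mat c) - sS c d • b1)⁻¹ *
            (sS c d • (1 : Mat c) + cS c d • b1)))⁻¹ *
        (sS c (-d) • (1 : Mat c) +
          cS c (-d) • ((cS c d • (1 : Mat c) - sS c d • b1)⁻¹ *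
            (sS c d • (1 : Mat c) + cS c d • b1))) = b1 ∧
      (cS c (-d) • (1 : Mat c) -
          sS c (-d) • ((cS c d • (1 : Mat c) - sS c d • b1)⁻¹ *
            (sS c d • (1 : Mat c) + cS c d • b1))) ^ n *
        ((cS c d • (1 : Mat c) - sS c d • b1) ^ n * b2) = b2) ∧
    -- (iii)
    (∀ φ : Mat c, IsUnit φ →
      (cS c d • (1 : Mat c) - sS c d • (φ * b1 * φ⁻¹))⁻¹ *
          (sS c d • (1 : Mat c) + cS c d • (φ * b1 * φ⁻¹)) =
        φ * ((cS c d • (1 : Mat c) - sS c d • b1)⁻¹ *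
          (sS c d • (1 : Mat c) + cS c d • b1)) * φ⁻¹ ∧
      (cS c d • (1 : Mat c) - sS c d • (φ * b1 * φ⁻¹)) ^ n * (φ * b2 * φ⁻¹) =
        φ * ((cS c d • (1 : Mat c) - sS c d • b1) ^ n * b2) * φ⁻¹) := by
  obtain ⟨hT1, hT2⟩ := hT
  set co := cS c d with hco
  set s := sS c d with hs
  set M : Mat c := co • (1 : Mat c) - s • b1 with hM
  set N : Mat c := s • (1 : Mat c) + co • b1 with hN
  have hsq : co ^ 2 + s ^ 2 = 1 := cS_sq_add_sS_sq c d
  clear_value co s M N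
  have hMdet : IsUnit M.det := (Matrix.isUnit_iff_isUnit_det M).mp hinv
  have hMM : M⁻¹ * M = 1 := Matrix.nonsing_inv_mul M hMdet
  have hMM' : M * M⁻¹ = 1 := Matrix.mul_nonsing_inv M hMdet
  -- key linear identities
  have key1 : co • M + s • N = 1 := by
    rw [hM, hN]
    match_scalars <;> first | ring1 | linear_combination hsq
  have key2 : (-s) • M + co • N = b1 := by
    rw [hM, hN]
    match_scalars <;> first | ring1 | linear_combination hsq
  -- commutation facts
  have hMN : M * N = N * M := by
    rw [hM, hN]
    simp only [mul_add, add_mul, sub_mul, mul_sub, Matrix.smul_mul, Matrix.mul_smul,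
      mul_one, one_mul, smul_smul]
    module
  have hMb2 : M * b2 = b2 * M := by
    rw [hM]
    simp only [sub_mul, mul_sub, Matrix.smul_mul, Matrix.mul_smul, mul_one, one_mul, hT1]
  have hNb2 : N * b2 = b2 * N := by
    rw [hN]
    simp only [add_mul, mul_add, Matrix.smul_mul, Matrix.mul_smul, mul_one, one_mul, hT1]
  have hMinv_comm : ∀ X : Mat c, M * X = X * M → M⁻¹ * X = X * M⁻¹ := by
    intro X hX
    calc M⁻¹ * X = M⁻¹ * X * (M * M⁻¹) := by rw [hMM', mul_one]
      _ = M⁻¹ * (X * M) * M⁻¹ := by simp only [mul_assoc]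
      _ = M⁻¹ * (M * X) * M⁻¹ := by rw [hX]
      _ = X * M⁻¹ := by rw [← mul_assoc, hMM, one_mul]
  set B1 : Mat c := M⁻¹ * N with hB1
  clear_value B1
  -- b1' expressions
  have hexp1 : co • (1 : Mat c) + s • B1 = M⁻¹ := by
    calc co • (1 : Mat c) + s • B1 = M⁻¹ * (co • M + s • N) := by
          rw [hB1, mul_add, Matrix.mul_smul, Matrix.mul_smul, hMM]
      _ = M⁻¹ := by rw [key1, mul_one]
  have hexp2 : (-s) • (1 : Mat c) + co • B1 = M⁻¹ * b1 := by
    calc (-s) • (1 : Mat c) + co • B1 = M⁻¹ * ((-s) • M + co • N) := by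
          rw [hB1, mul_add, Matrix.mul_smul, Matrix.mul_smul, hMM]
      _ = M⁻¹ * b1 := by rw [key2]
  have hcneg : cS c (-d) • (1 : Mat c) - sS c (-d) • B1 = M⁻¹ := by
    rw [cS_neg, sS_neg, ← hco, ← hs, neg_smul, sub_neg_eq_add, hexp1]
  have hsneg : sS c (-d) • (1 : Mat c) + cS c (-d) • B1 = M⁻¹ * b1 := by
    rw [cS_neg, sS_neg, ← hco, ← hs, neg_smul, ← hexp2, neg_smul]
  have hinvMinv : IsUnit M⁻¹ := ⟨⟨M⁻¹, M, hMM, hMM'⟩, rfl⟩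
  have hMinvinv : M⁻¹⁻¹ = M := Matrix.nonsing_inv_nonsing_inv M hMdet
  refine ⟨⟨?_, ?_⟩, ⟨?_, ?_, ?_⟩, ?_⟩
  · -- (i) commutation
    have h1 : M⁻¹ * b2 = b2 * M⁻¹ := hMinv_comm b2 hMb2
    have h2 : M⁻¹ * M ^ n = M ^ n * M⁻¹ := hMinv_comm (M ^ n) (Commute.pow_right rfl n)
    have h3 : N * M ^ n = M ^ n * N := Commute.pow_right (Commute.symm hMN) n
    have h4 : b2 * M ^ n = M ^ n * b2 := Commute.pow_right (Commute.symm hMb2) n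
    rw [hB1]
    have cM : Commute M (M ^ n * b2) := (Commute.pow_right rfl n).mul_right hMb2
    have c1 : Commute M⁻¹ (M ^ n * b2) := hMinv_comm _ cM
    have c2 : Commute N (M ^ n * b2) :=
      (((Commute.symm hMN)).pow_right n).mul_right (hNb2 : Commute N b2)
    exact c1.mul_left c2
  · -- (i) CondT2
    intro z w v hv1 hv2 hve
    have hMv1 : ((s + z * co) • (1 : Mat c) + (co - z * s) • b1).mulVec v = 0 := by
      have : M * (B1 + z • 1) = (s + z * co) • (1 : Mat c) + (co - z * s) • b1 := by
        rw [hB1, mul_add, ← mul_assoc, hMM', one_mul, Matrix.mul_smul, mul_one, hM, hN]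
        module
      rw [← this, ← Matrix.mulVec_mulVec, hv1, Matrix.mulVec_zero]
    have hnz : (co - z * s) ≠ 0 ∨ (s + z * co) ≠ 0 := by
      by_contra h
      push_neg at h
      have h1 := h.1
      have h2 := h.2
      have : co * (co - z * s) + s * (s + z * co) = 1 := by ring_nf; linear_combination hsq
      rw [h1, h2] at this
      simp at this
    rw [Matrix.add_mulVec, Matrix.smul_mulVec, Matrix.smul_mulVec,
      Matrix.one_mulVec] at hMv1
    rcases eq_or_ne (co - z * s) 0 with hz | hz
    · have hs' : (s + z * co) ≠ 0 := by
        rcases hnz with h | h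
        · exact absurd hz h
        · exact h
      rw [hz, zero_smul, add_zero] at hMv1
      have := smul_eq_zero.mp hMv1
      rcases this with h | h
      · exact absurd h hs'
      · exact h
    · -- main case
      have hb1v' : b1.mulVec v = (-((s + z * co) / (co - z * s))) • v := by
        have h0 : (co - z * s) • b1.mulVec v = -((s + z * co) • v) :=
          eq_neg_of_add_eq_zero_right hMv1
        calc b1.mulVec v
            = (co - z * s)⁻¹ • ((co - z * s) • b1.mulVec v) := by
              rw [smul_smul, inv_mul_cancel₀ hz, one_smul]
          _ = (co - z * s)⁻¹ • (-((s + z * co) • v)) := by rw [h0]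
          _ = (-((s + z * co) / (co - z * s))) • v := by
              rw [smul_neg, smul_smul, neg_smul]
              congr 2
              field_simp
      have hb1v : (b1 + ((s + z * co) / (co - z * s)) • 1).mulVec v = 0 := by
        rw [Matrix.add_mulVec, Matrix.smul_mulVec, Matrix.one_mulVec, hb1v',
          neg_smul, neg_add_cancel]
      have hMv : M.mulVec v = (co - z * s)⁻¹ • v := by
        rw [hM, Matrix.sub_mulVec, Matrix.smul_mulVec, Matrix.smul_mulVec,
          Matrix.one_mulVec, hb1v', smul_smul, ← sub_smul]
        congr 1
        field_simp
        have hz' : co - s * z ≠ 0 := by rw [mul_comm]; exact hz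
        linear_combination (co - s * z)⁻¹ * hsq - co * mul_inv_cancel₀ hz'
      have hMnv : (M ^ n).mulVec v = ((co - z * s)⁻¹) ^ n • v := by
        clear hv2 hn
        induction n with
        | zero => simp
        | succ m ih =>
            rw [pow_succ, ← Matrix.mulVec_mulVec, hMv, Matrix.mulVec_smul, ih,
              smul_smul, pow_succ]
            ring_nf
      have hb2v : (b2 + (w * (co - z * s) ^ n) • 1).mulVec v = 0 := by
        have h4 : (M ^ n * b2) = b2 * M ^ n := Commute.pow_left hMb2 n
        rw [h4, Matrix.add_mulVec, Matrix.smul_mulVec, Matrix.one_mulVec,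
          ← Matrix.mulVec_mulVec, hMnv, Matrix.mulVec_smul] at hv2
        rw [Matrix.add_mulVec, Matrix.smul_mulVec, Matrix.one_mulVec]
        have hzn : ((co - z * s)) ^ n ≠ 0 := pow_ne_zero n hz
        have h5 := congrArg (fun x => ((co - z * s) ^ n) • x) hv2
        simp only [smul_add, smul_smul, smul_zero] at h5
        rw [inv_pow, mul_inv_cancel₀ hzn, one_smul] at h5
        convert h5 using 3
        ring
      exact hT2 _ (w * (co - z * s) ^ n) v hb1v hb2v hve
  · -- (ii) IsUnit
    rw [hcneg]
    exact hinvMinv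
  · -- (ii) b1 recovered
    rw [hcneg, hsneg, hMinvinv, ← mul_assoc, hMM', one_mul]
  · -- (ii) b2 recovered
    rw [hcneg]
    have hcomm : Commute M⁻¹ M := by
      unfold Commute SemiconjBy
      rw [hMM, hMM']
    rw [← mul_assoc, ← Commute.mul_pow hcomm, hMM, one_pow, one_mul]
  · -- (iii)
    intro φ hφ
    have hφdet : IsUnit φ.det := (Matrix.isUnit_iff_isUnit_det φ).mp hφ
    have hφφ : φ⁻¹ * φ = 1 := Matrix.nonsing_inv_mul φ hφdet
    have hφφ' : φ * φ⁻¹ = 1 := Matrix.mul_nonsing_inv φ hφdet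
    have hM' : co • (1 : Mat c) - s • (φ * b1 * φ⁻¹) = φ * M * φ⁻¹ := by
      simp only [hM, mul_sub, sub_mul, Matrix.mul_smul, Matrix.smul_mul, mul_one, hφφ']
    have hN' : s • (1 : Mat c) + co • (φ * b1 * φ⁻¹) = φ * N * φ⁻¹ := by
      simp only [hN, mul_add, add_mul, Matrix.mul_smul, Matrix.smul_mul, mul_one, hφφ']
    have hMinv' : (φ * M * φ⁻¹)⁻¹ = φ * M⁻¹ * φ⁻¹ := by
      apply Matrix.inv_eq_right_inv
      calc φ * M * φ⁻¹ * (φ * M⁻¹ * φ⁻¹) = φ * M * (φ⁻¹ * φ) * M⁻¹ * φ⁻¹ := by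
            simp only [mul_assoc]
        _ = 1 := by rw [hφφ, mul_one, mul_assoc φ M M⁻¹, hMM', mul_one, hφφ']
    constructor
    · rw [hB1, hM', hN', hMinv']
      calc φ * M⁻¹ * φ⁻¹ * (φ * N * φ⁻¹) = φ * M⁻¹ * (φ⁻¹ * φ) * N * φ⁻¹ := by
            simp only [mul_assoc]
        _ = φ * (M⁻¹ * N) * φ⁻¹ := by rw [hφφ]; simp only [mul_one, mul_assoc]
    · rw [hM', myConjPow φ M φ⁻¹ hφφ n]
      calc φ * M ^ n * φ⁻¹ * (φ * b2 * φ⁻¹) = φ * M ^ n * (φ⁻¹ * φ) * b2 * φ⁻¹ := by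
            simp only [mul_assoc]
        _ = φ * (M ^ n * b2) * φ⁻¹ := by rw [hφφ]; simp only [mul_one, mul_assoc]
end

section
/- Fix an integer c ≥ 1 and let A₁, A₂ ∈ M_c(ℂ) satisfy condition (P2). Then there exists m ∈ {0, …, c} such that A_{2m} = s_m A₁ + c_m A₂ is invertible, where c_m = cos(πm/(c+1)) and s_m = sin(πm/(c+1)). -/
open Matrix

/-- if (A₁, A₂) satisfies (P2), there exists m ∈ {0,…,c} with
A_{2m} = s_m A₁ + c_m A₂ invertible. -/
theorem stmt13 (c : ℕ) (hc : 0 < c) (A1 A2 : Mat c) (hP2 : CondP2 c A1 A2) :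
    ∃ m : ℕ, m ≤ c ∧ IsUnit (A2M c m A1 A2) := by
  by_contra hcon
  push_neg at hcon
  have hdet : ∀ m : ℕ, m ≤ c → (A2M c m A1 A2).det = 0 := by
    intro m hm
    by_contra hd
    exact hcon m hm ((Matrix.isUnit_iff_isUnit_det _).2 (isUnit_iff_ne_zero.2 hd))
  have hNpos : (0:ℝ) < (c : ℝ) + 1 := by positivity
  -- m = 0 gives det A2 = 0
  have hA2 : A2.det = 0 := by
    have h0 := hdet 0 (Nat.zero_le c)
    simpa [A2M, cS, sS] using h0
  -- the polynomial q(z) = det (z • A2 + A1)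
  set q : Polynomial ℂ :=
    Matrix.det ((Polynomial.X : Polynomial ℂ) • A2.map Polynomial.C + A1.map Polynomial.C) with hq
  have heval : ∀ z : ℂ, q.eval z = (z • A2 + A1).det := by
    intro z
    have := (Polynomial.evalRingHom z).map_det
      ((Polynomial.X : Polynomial ℂ) • A2.map Polynomial.C + A1.map Polynomial.C)
    rw [hq]
    rw [show Polynomial.eval z _ = (Polynomial.evalRingHom z) (Matrix.det _) from rfl, this]
    congr 1
    ext i j
    simp [Matrix.map_apply]; ring
  -- q has degree ≤ c, top coefficient det A2 = 0
  have hdeg : q.natDegree ≤ c := by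
    have := Polynomial.natDegree_det_X_add_C_le A2 A1 (n := Fin c)
    simpa using this
  have hcoeff : q.coeff c = 0 := by
    have := Polynomial.coeff_det_X_add_C_card A2 A1 (n := Fin c)
    simpa [hq, hA2] using this
  -- the roots
  set θ : ℕ → ℝ := fun m => Real.pi * m / ((c:ℝ) + 1) with hθ
  have hθmem : ∀ m : ℕ, 1 ≤ m → m ≤ c → θ m ∈ Set.Ioo 0 Real.pi := by
    intro m h1 h2
    constructor
    · have : (0:ℝ) < (m:ℝ) := by exact_mod_cast h1
      positivity
    · rw [hθ]
      rw [div_lt_iff₀ hNpos]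
      have hm : (m:ℝ) < (c:ℝ) + 1 := by exact_mod_cast Nat.lt_succ_of_le h2
      nlinarith [Real.pi_pos]
  have hroot : ∀ m : ℕ, 1 ≤ m → m ≤ c →
      q.eval ((Real.cos (θ m) / Real.sin (θ m) : ℝ) : ℂ) = 0 := by
    intro m h1 h2
    have hmem := hθmem m h1 h2
    have hs : 0 < Real.sin (θ m) := Real.sin_pos_of_pos_of_lt_pi hmem.1 hmem.2
    have hs' : ((Real.sin (θ m) : ℝ) : ℂ) ≠ 0 := by exact_mod_cast hs.ne'
    have hsS : sS c (m : ℤ) = ((Real.sin (θ m) : ℝ) : ℂ) := by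
      rw [sS, hθ]; norm_num
    have hcS : cS c (m : ℤ) = ((Real.cos (θ m) : ℝ) : ℂ) := by
      rw [cS, hθ]; norm_num
    have hA2M : A2M c m A1 A2 =
        ((Real.sin (θ m) : ℝ) : ℂ) •
          ((((Real.cos (θ m) / Real.sin (θ m) : ℝ)) : ℂ) • A2 + A1) := by
      rw [A2M, hsS, hcS, smul_add, smul_smul, ← Complex.ofReal_mul,
        mul_comm (Real.sin (θ m)), div_mul_cancel₀ _ hs.ne', add_comm]
    have := hdet m h2
    rw [hA2M, Matrix.det_smul] at this
    have hpow : (((Real.sin (θ m) : ℝ) : ℂ)) ^ Fintype.card (Fin c) ≠ 0 := pow_ne_zero _ hs'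
    have hz := (mul_eq_zero.1 this).resolve_left hpow
    rw [heval]
    exact hz
  -- q must be zero
  have hq0 : q = 0 := by
    by_contra hne
    have hdlt : q.natDegree < c := by
      rcases lt_or_eq_of_le hdeg with h | h
      · exact h
      · exfalso
        have : q.leadingCoeff = 0 := by rw [Polynomial.leadingCoeff, h]; exact hcoeff
        exact hne (Polynomial.leadingCoeff_eq_zero.1 this)
    -- injective roots
    have hinj : Set.InjOn (fun m : ℕ => ((Real.cos (θ m) / Real.sin (θ m) : ℝ) : ℂ))
        (Finset.Icc 1 c : Finset ℕ) := by
      intro a ha b hb hab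
      simp only [Finset.coe_Icc, Set.mem_Icc] at ha hb
      have ha' := hθmem a ha.1 ha.2
      have hb' := hθmem b hb.1 hb.2
      dsimp only at hab
      have hr : Real.cos (θ a) / Real.sin (θ a) = Real.cos (θ b) / Real.sin (θ b) := by
        exact_mod_cast hab
      have hcot : ∀ x : ℝ, Real.cos x / Real.sin x = Real.tan (Real.pi/2 - x) := by
        intro x
        rw [Real.tan_pi_div_two_sub, Real.tan_eq_sin_div_cos, inv_div]
      rw [hcot, hcot] at hr
      have hmem : ∀ x : ℝ, x ∈ Set.Ioo 0 Real.pi →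
          Real.pi/2 - x ∈ Set.Ioo (-(Real.pi/2)) (Real.pi/2) := by
        intro x hx
        constructor <;> [linarith [hx.2]; linarith [hx.1]]
      have := Real.injOn_tan (hmem _ ha') (hmem _ hb') hr
      have hθeq : θ a = θ b := by linarith
      have : (a : ℝ) = b := by
        rw [hθ] at hθeq
        simp only at hθeq
        rw [div_eq_div_iff hNpos.ne' hNpos.ne'] at hθeq
        have h4 := mul_right_cancel₀ hNpos.ne' hθeq
        exact mul_left_cancel₀ Real.pi_ne_zero h4
      exact_mod_cast this
    have hsub : (Finset.Icc 1 c).image (fun m : ℕ => ((Real.cos (θ m) / Real.sin (θ m) : ℝ) : ℂ))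
        ⊆ q.roots.toFinset := by
      intro x hx
      simp only [Finset.mem_image] at hx
      obtain ⟨m, hm, rfl⟩ := hx
      simp only [Finset.mem_Icc] at hm
      rw [Multiset.mem_toFinset, Polynomial.mem_roots hne]
      exact hroot m hm.1 hm.2
    have hcard : c ≤ q.roots.toFinset.card := by
      have h1 : ((Finset.Icc 1 c).image
          (fun m : ℕ => ((Real.cos (θ m) / Real.sin (θ m) : ℝ) : ℂ))).card = c := by
        rw [Finset.card_image_of_injOn hinj]
        simp
      rw [← h1]
      exact Finset.card_le_card hsub
    have := (q.roots.toFinset_card_le).trans (q.card_roots' |>.trans hdeg)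
    have h2 := (q.roots.toFinset_card_le).trans q.card_roots'
    omega
  -- contradiction with P2
  obtain ⟨ν, hν, hdν⟩ := hP2
  apply hdν
  rcases eq_or_ne ν.1 0 with h1 | h1
  · have h2 : ν.2 ≠ 0 := by
      intro h2
      exact hν (Prod.ext h1 h2)
    rw [h1, zero_smul, zero_add, Matrix.det_smul, hA2, mul_zero]
  · have : ν.1 • A1 + ν.2 • A2 = ν.1 • ((ν.2 / ν.1) • A2 + A1) := by
      rw [smul_add, smul_smul, mul_div_cancel₀ _ h1, add_comm]
    rw [this, Matrix.det_smul, ← heval, hq0]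
    simp
end
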